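/- Let a > 0, b > 0, c ∈ ℝ, d < 0, v > 0. Let y₁, y₂ : (0, ∞) → ℝ be positive solutions of the homogeneous equation x² y'' + (c x + d) y' − (a x + b) y = 0 with Wronskian y₁ y₂' − y₁' y₂ = −v x^{−c} e^{d/x}. Assume the bounds: y₂(t) ≤ C t^{1/4 − c/2} e^{−2√(a t)} for t ≥ t₀ and y₁(t) ≤ C t^{2−c} e^{d/t} for 0 < t ≤ t₀. Let f be bounded continuous on (0, ∞). Then both integrals ∫_x^∞ y₂(t) f(t) / (t² W(t)) dt and ∫_0^x y₁(t) f(t) / (t² W(t)) dt converge absolutely for every x > 0, where W(t) = −v t^{−c} e^{d/t}, and consequently y(x) = (∫_x^∞ y₂ f/(t²W) dt) y₁(x) + (∫_0^x y₁ f/(t²W) dt) y₂(x) is a well-defined solution of x² y'' + (c x + d) y' − (a x + b) y = f(x) on (0, ∞). -/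

import Mathlib

open Set Real MeasureTheory

open Filter in
private lemma my_sqrt_atTop : Tendsto Real.sqrt atTop atTop := by
  apply tendsto_atTop_atTop.2
  intro b
  refine ⟨b ^ 2, fun t ht => ?_⟩
  calc b ≤ |b| := le_abs_self b
    _ = Real.sqrt (b ^ 2) := (Real.sqrt_sq_eq_abs b).symm
    _ ≤ Real.sqrt t := Real.sqrt_le_sqrt ht

open Filter in
private lemma my_tail_int (p A T : ℝ) (hA : 0 < A) (hT : 0 < T) :
    IntegrableOn (fun t => t ^ p * Real.exp (-(A * Real.sqrt t))) (Ioi T) := by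
  have hcont : ContinuousOn (fun t : ℝ => t ^ p * Real.exp (-(A * Real.sqrt t))) (Ioi 0) := by
    apply ContinuousOn.mul
    · exact fun t ht => (Real.continuousAt_rpow_const t p (Or.inl (ne_of_gt ht))).continuousWithinAt
    · exact (Real.continuous_exp.comp ((continuous_const.mul Real.continuous_sqrt).neg)).continuousOn
  have htend : Tendsto (fun t : ℝ => t ^ (p + 2) * Real.exp (-(A * Real.sqrt t)))
      atTop (nhds 0) := by
    have h1 := (tendsto_rpow_mul_exp_neg_mul_atTop_nhds_zero (2 * (p + 2)) A hA).comp
      my_sqrt_atTop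
    refine h1.congr' ?_
    filter_upwards [eventually_ge_atTop (0:ℝ)] with t ht
    have h2 : Real.sqrt t ^ (2 * (p + 2)) = t ^ (p + 2) := by
      rw [Real.sqrt_eq_rpow, ← Real.rpow_mul ht]
      congr 1; ring
    simp only [Function.comp, h2, neg_mul]
  obtain ⟨T', hT'⟩ := (Filter.eventually_atTop).1
    ((htend.eventually (gt_mem_nhds (zero_lt_one))).and
      (eventually_ge_atTop (max T 1)))
  have hT'T : T ≤ T' := le_trans (le_max_left _ _) (hT'  T' le_rfl).2
  have hT'1 : (1:ℝ) ≤ T' := le_trans (le_max_right _ _) (hT' T' le_rfl).2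
  have hsplit : Ioi T = Ioc T T' ∪ Ioi T' := (Ioc_union_Ioi_eq_Ioi hT'T).symm
  rw [hsplit]
  apply IntegrableOn.union
  · refine ((hcont.mono ?_).integrableOn_Icc).mono_set Ioc_subset_Icc_self
    exact fun t ht => lt_of_lt_of_le hT ht.1
  · refine Integrable.mono' (g := fun t : ℝ => t ^ (-2 : ℝ))
      (integrableOn_Ioi_rpow_of_lt (by norm_num) (lt_of_lt_of_le zero_lt_one hT'1))
      ((hcont.mono fun t ht => lt_of_lt_of_le (lt_of_lt_of_le zero_lt_one hT'1) (le_of_lt ht)).aestronglyMeasurable measurableSet_Ioi) ?_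
    filter_upwards [ae_restrict_mem measurableSet_Ioi] with t ht
    have ht0 : (0:ℝ) < t := lt_of_lt_of_le zero_lt_one (le_trans hT'1 (le_of_lt ht))
    have hb := (hT' t (le_of_lt ht)).1
    have hkey : t ^ p * Real.exp (-(A * Real.sqrt t))
        = (t ^ (p + 2) * Real.exp (-(A * Real.sqrt t))) * t ^ (-2:ℝ) := by
      rw [mul_right_comm, ← Real.rpow_add ht0]
      norm_num
    rw [Real.norm_eq_abs, abs_of_nonneg (by positivity), hkey]
    calc (t ^ (p + 2) * Real.exp (-(A * Real.sqrt t))) * t ^ (-2:ℝ)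
        ≤ 1 * t ^ (-2:ℝ) := by
          apply mul_le_mul_of_nonneg_right (le_of_lt hb) (by positivity)
      _ = t ^ (-2:ℝ) := one_mul _

/-- variation-of-parameters solution of the inhomogeneous doubly-confluent
Heun equation `x² y'' + (cx+d) y' − (ax+b) y = f`. Under the stated growth bounds on the
positive homogeneous solutions `y₁`, `y₂` with Wronskian `W(x) = −v x^{−c} e^{d/x}`, both
kernel integrals converge absolutely, and
`y(x) = (∫_x^∞ y₂ f/(t²W)) y₁(x) + (∫_0^x y₁ f/(t²W)) y₂(x)` solves the equation. -/
theorem stmt_19 (a b c d v : ℝ) (ha : 0 < a) (hb : 0 < b) (hd : d < 0) (hv : 0 < v)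
    (y₁ y₁' y₁'' y₂ y₂' y₂'' : ℝ → ℝ)
    (hy₁ : ∀ x ∈ Ioi (0:ℝ), HasDerivAt y₁ (y₁' x) x)
    (hy₁' : ∀ x ∈ Ioi (0:ℝ), HasDerivAt y₁' (y₁'' x) x)
    (hy₂ : ∀ x ∈ Ioi (0:ℝ), HasDerivAt y₂ (y₂' x) x)
    (hy₂' : ∀ x ∈ Ioi (0:ℝ), HasDerivAt y₂' (y₂'' x) x)
    (hy₁pos : ∀ x ∈ Ioi (0:ℝ), 0 < y₁ x)
    (hy₂pos : ∀ x ∈ Ioi (0:ℝ), 0 < y₂ x)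
    (hode₁ : ∀ x ∈ Ioi (0:ℝ),
      x ^ 2 * y₁'' x + (c * x + d) * y₁' x - (a * x + b) * y₁ x = 0)
    (hode₂ : ∀ x ∈ Ioi (0:ℝ),
      x ^ 2 * y₂'' x + (c * x + d) * y₂' x - (a * x + b) * y₂ x = 0)
    (hWr : ∀ x ∈ Ioi (0:ℝ),
      y₁ x * y₂' x - y₁' x * y₂ x = -v * x ^ (-c) * Real.exp (d / x))
    (Cb t₀ : ℝ) (hCb : 0 < Cb) (ht₀ : 0 < t₀)
    (hbd₂ : ∀ t ≥ t₀, y₂ t ≤ Cb * t ^ ((1:ℝ)/4 - c/2) * Real.exp (-(2 * Real.sqrt (a * t))))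
    (hbd₁ : ∀ t ∈ Ioc (0:ℝ) t₀, y₁ t ≤ Cb * t ^ ((2:ℝ) - c) * Real.exp (d / t))
    (f : ℝ → ℝ) (hfb : ∃ M : ℝ, ∀ x ∈ Ioi (0:ℝ), |f x| ≤ M)
    (hfc : ContinuousOn f (Ioi (0:ℝ)))
    (W : ℝ → ℝ) (hW : ∀ t ∈ Ioi (0:ℝ), W t = -v * t ^ (-c) * Real.exp (d / t))
    (y : ℝ → ℝ)
    (hy : ∀ x ∈ Ioi (0:ℝ),
      y x = (∫ t in Ioi x, y₂ t * f t / (t ^ 2 * W t)) * y₁ x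
            + (∫ t in Ioc (0:ℝ) x, y₁ t * f t / (t ^ 2 * W t)) * y₂ x) :
    (∀ x ∈ Ioi (0:ℝ),
        IntegrableOn (fun t => y₂ t * f t / (t ^ 2 * W t)) (Ioi x) ∧
        IntegrableOn (fun t => y₁ t * f t / (t ^ 2 * W t)) (Ioc (0:ℝ) x)) ∧
      ∀ x ∈ Ioi (0:ℝ),
        x ^ 2 * deriv (deriv y) x + (c * x + d) * deriv y x - (a * x + b) * y x = f x := by
  obtain ⟨M₀, hM₀⟩ := hfb
  set M : ℝ := max M₀ 0 with hMdef
  have hM : ∀ x ∈ Ioi (0:ℝ), |f x| ≤ M := fun x hx => (hM₀ x hx).trans (le_max_left _ _)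
  have hMnn : 0 ≤ M := le_max_right _ _
  -- continuity of the homogeneous solutions
  have hy₁c : ContinuousOn y₁ (Ioi (0:ℝ)) :=
    fun x hx => (hy₁ x hx).continuousAt.continuousWithinAt
  have hy₂c : ContinuousOn y₂ (Ioi (0:ℝ)) :=
    fun x hx => (hy₂ x hx).continuousAt.continuousWithinAt
  -- denominator facts
  have hDpos : ∀ t ∈ Ioi (0:ℝ), 0 < v * (t ^ 2 * t ^ (-c) * Real.exp (d / t)) := by
    intro t ht
    have : (0:ℝ) < t := ht
    positivity
  have hDval : ∀ t ∈ Ioi (0:ℝ), t ^ 2 * W t = -(v * (t ^ 2 * t ^ (-c) * Real.exp (d / t))) := by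
    intro t ht; rw [hW t ht]; ring
  have hDne : ∀ t ∈ Ioi (0:ℝ), t ^ 2 * W t ≠ 0 := by
    intro t ht; rw [hDval t ht]
    exact neg_ne_zero.2 (ne_of_gt (hDpos t ht))
  set g₂ : ℝ → ℝ := fun t => y₂ t * f t / (t ^ 2 * W t) with hg₂def
  set g₁ : ℝ → ℝ := fun t => y₁ t * f t / (t ^ 2 * W t) with hg₁def
  -- continuity of the kernels
  have hdenomc : ContinuousOn (fun t : ℝ => t ^ 2 * (-v * t ^ (-c) * Real.exp (d / t)))
      (Ioi (0:ℝ)) := by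
    apply ContinuousOn.mul (continuous_pow 2).continuousOn
    apply ContinuousOn.mul
    · exact ContinuousOn.mul continuousOn_const
        (fun t ht => (Real.continuousAt_rpow_const t (-c) (Or.inl (ne_of_gt ht))).continuousWithinAt)
    · exact Real.continuous_exp.comp_continuousOn
        (continuousOn_const.div continuousOn_id fun t ht => ne_of_gt ht)
  have hgc : ∀ (u : ℝ → ℝ), ContinuousOn u (Ioi (0:ℝ)) →
      ContinuousOn (fun t => u t * f t / (t ^ 2 * W t)) (Ioi (0:ℝ)) := by
    intro u huc
    apply ContinuousOn.congr
      (f := fun t => u t * f t / (t ^ 2 * (-v * t ^ (-c) * Real.exp (d / t))))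
    · apply ContinuousOn.div (huc.mul hfc) hdenomc
      intro t ht
      have h1 := hDne t ht
      rwa [hW t ht] at h1
    · intro t ht; dsimp only; rw [hW t ht]
  have hg₂cont : ContinuousOn g₂ (Ioi (0:ℝ)) := hgc y₂ hy₂c
  have hg₁cont : ContinuousOn g₁ (Ioi (0:ℝ)) := hgc y₁ hy₁c
  -- absolute value of the kernels
  have habs : ∀ (u : ℝ → ℝ), (∀ t ∈ Ioi (0:ℝ), 0 < u t) → ∀ t ∈ Ioi (0:ℝ),
      |u t * f t / (t ^ 2 * W t)| = u t * |f t| / (v * (t ^ 2 * t ^ (-c) * Real.exp (d / t))) := by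
    intro u hupos t ht
    rw [abs_div, abs_mul, abs_of_pos (hupos t ht), hDval t ht, abs_neg,
      abs_of_pos (hDpos t ht)]
  -- Integrability of g₂ on Ioi x
  have hInt₂ : ∀ x ∈ Ioi (0:ℝ), IntegrableOn g₂ (Ioi x) := by
    intro x hx
    have hx0 : (0:ℝ) < x := hx
    set T : ℝ := max x t₀ with hTdef
    have hT0 : 0 < T := lt_of_lt_of_le hx0 (le_max_left _ _)
    have hxT : x ≤ T := le_max_left _ _
    have ht₀T : t₀ ≤ T := le_max_right _ _
    rw [(Ioc_union_Ioi_eq_Ioi hxT).symm]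
    apply IntegrableOn.union
    · refine ((hg₂cont.mono ?_).integrableOn_Icc).mono_set Ioc_subset_Icc_self
      exact fun t ht => lt_of_lt_of_le hx0 ht.1
    · set K : ℝ := Cb * M / v * Real.exp (-(d / T)) with hKdef
      refine Integrable.mono'
        (g := fun t => K * (t ^ (c/2 - 7/4) * Real.exp (-(2 * Real.sqrt a * Real.sqrt t))))
        ((my_tail_int (c/2 - 7/4) (2 * Real.sqrt a) T (by positivity) hT0).const_mul K)
        ((hg₂cont.mono fun t ht => lt_of_lt_of_le hT0 (le_of_lt ht)).aestronglyMeasurable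
          measurableSet_Ioi) ?_
      filter_upwards [ae_restrict_mem measurableSet_Ioi] with t ht
      have hTt : T ≤ t := le_of_lt ht
      have ht0 : (0:ℝ) < t := lt_of_lt_of_le hT0 hTt
      have htI : t ∈ Ioi (0:ℝ) := ht0
      have hE : (0:ℝ) < Real.exp (d / t) := Real.exp_pos _
      rw [Real.norm_eq_abs, habs y₂ hy₂pos t htI]
      have hnum : y₂ t * |f t| ≤ Cb * t ^ ((1:ℝ)/4 - c/2) * Real.exp (-(2 * Real.sqrt (a * t))) * M := by
        apply mul_le_mul (hbd₂ t (le_trans ht₀T hTt)) (hM t htI) (abs_nonneg _)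
        positivity
      calc y₂ t * |f t| / (v * (t ^ 2 * t ^ (-c) * Real.exp (d / t)))
          ≤ (Cb * t ^ ((1:ℝ)/4 - c/2) * Real.exp (-(2 * Real.sqrt (a * t))) * M) /
            (v * (t ^ 2 * t ^ (-c) * Real.exp (d / t))) := by
            exact div_le_div_of_nonneg_right hnum (hDpos t htI).le
        _ = Cb * M / v * t ^ (c/2 - 7/4) * Real.exp (-(2 * Real.sqrt a * Real.sqrt t)) *
            Real.exp (-(d / t)) := by
            have hpow : t ^ ((1:ℝ)/4 - c/2) = t ^ (c/2 - 7/4) * (t ^ 2 * t ^ (-c)) := by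
              rw [← Real.rpow_natCast t 2, ← Real.rpow_add ht0, ← Real.rpow_add ht0]
              congr 1 <;> push_cast <;> try ring
            rw [hpow, Real.sqrt_mul ha.le t, Real.exp_neg (d / t)]
            have h2 : t ^ (2:ℕ) * t ^ (-c) ≠ 0 := by positivity
            field_simp
        _ ≤ Cb * M / v * t ^ (c/2 - 7/4) * Real.exp (-(2 * Real.sqrt a * Real.sqrt t)) *
            Real.exp (-(d / T)) := by
            apply mul_le_mul_of_nonneg_left ?_ (by positivity)
            apply Real.exp_le_exp.2
            rw [neg_le_neg_iff]
            rw [div_le_div_iff₀ hT0 ht0]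
            exact mul_le_mul_of_nonpos_left hTt (le_of_lt hd)
        _ = K * (t ^ (c/2 - 7/4) * Real.exp (-(2 * Real.sqrt a * Real.sqrt t))) := by
            rw [hKdef]; ring
  -- Integrability of g₁ on Ioc 0 x
  have hInt₁ : ∀ x ∈ Ioi (0:ℝ), IntegrableOn g₁ (Ioc (0:ℝ) x) := by
    intro x hx
    have hx0 : (0:ℝ) < x := hx
    set T : ℝ := max x t₀ with hTdef
    have hT0 : 0 < T := lt_of_lt_of_le hx0 (le_max_left _ _)
    have hxT : x ≤ T := le_max_left _ _
    have ht₀T : t₀ ≤ T := le_max_right _ _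
    have hmain : IntegrableOn g₁ (Ioc (0:ℝ) T) := by
      rw [(Ioc_union_Ioc_eq_Ioc (le_of_lt ht₀) ht₀T).symm]
      apply IntegrableOn.union
      · refine Integrable.mono'
          (g := fun _ : ℝ => Cb * M / v)
          (integrableOn_const measure_Ioc_lt_top.ne)
          ((hg₁cont.mono fun t ht => ht.1).aestronglyMeasurable measurableSet_Ioc) ?_
        filter_upwards [ae_restrict_mem measurableSet_Ioc] with t ht
        have ht0 : (0:ℝ) < t := ht.1
        have htI : t ∈ Ioi (0:ℝ) := ht0
        rw [Real.norm_eq_abs, habs y₁ hy₁pos t htI]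
        have hnum : y₁ t * |f t| ≤ Cb * t ^ ((2:ℝ) - c) * Real.exp (d / t) * M := by
          apply mul_le_mul (hbd₁ t ht) (hM t htI) (abs_nonneg _)
          positivity
        calc y₁ t * |f t| / (v * (t ^ 2 * t ^ (-c) * Real.exp (d / t)))
            ≤ (Cb * t ^ ((2:ℝ) - c) * Real.exp (d / t) * M) /
              (v * (t ^ 2 * t ^ (-c) * Real.exp (d / t))) := by
              exact div_le_div_of_nonneg_right hnum (hDpos t htI).le
          _ = Cb * M / v := by
              have hpow : t ^ ((2:ℝ) - c) = t ^ 2 * t ^ (-c) := by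
                rw [← Real.rpow_natCast t 2, ← Real.rpow_add ht0]
                congr 1 <;> push_cast <;> try ring
              rw [hpow]
              have h2 : t ^ (2:ℕ) * t ^ (-c) ≠ 0 := by positivity
              have hE : Real.exp (d / t) ≠ 0 := ne_of_gt (Real.exp_pos _)
              field_simp
      · refine ((hg₁cont.mono ?_).integrableOn_Icc).mono_set Ioc_subset_Icc_self
        exact fun t ht => lt_of_lt_of_le ht₀ ht.1
    exact hmain.mono_set (Ioc_subset_Ioc le_rfl hxT)
  refine ⟨fun x hx => ⟨hInt₂ x hx, hInt₁ x hx⟩, ?_⟩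
  -- the variation-of-parameters coefficients
  set A : ℝ → ℝ := fun u => ∫ t in Ioi u, g₂ t with hAdef
  set B : ℝ → ℝ := fun u => ∫ t in Ioc (0:ℝ) u, g₁ t with hBdef
  have hmeasAt : ∀ (g : ℝ → ℝ), ContinuousOn g (Ioi (0:ℝ)) → ∀ x ∈ Ioi (0:ℝ),
      StronglyMeasurableAtFilter g (nhds x) volume :=
    fun g hgc x hx => ⟨Ioi 0, isOpen_Ioi.mem_nhds hx, hgc.aestronglyMeasurable measurableSet_Ioi⟩
  have hII : ∀ (g : ℝ → ℝ), ContinuousOn g (Ioi (0:ℝ)) → ∀ ε x : ℝ, 0 < ε → 0 < x →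
      IntervalIntegrable g volume ε x := by
    intro g hgc ε x hε hx
    apply ContinuousOn.intervalIntegrable
    apply hgc.mono
    intro t htI
    exact lt_of_lt_of_le (lt_min hε hx) htI.1
  -- derivative of A
  have hA' : ∀ x ∈ Ioi (0:ℝ), HasDerivAt A (-(g₂ x)) x := by
    intro x hx
    have hx0 : (0:ℝ) < x := hx
    set ε : ℝ := x / 2 with hεdef
    have hε0 : (0:ℝ) < ε := by positivity
    have hεx : ε < x := by rw [hεdef]; linarith
    have hrepr : ∀ u ∈ Ioi ε, A u = (∫ t in Ioi ε, g₂ t) - ∫ t in ε..u, g₂ t := by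
      intro u hu
      have hεu : ε ≤ u := le_of_lt hu
      have hsplit : Ioi ε = Ioc ε u ∪ Ioi u := (Ioc_union_Ioi_eq_Ioi hεu).symm
      have h2 : IntegrableOn g₂ (Ioi ε) := hInt₂ ε hε0
      have h3 : IntegrableOn g₂ (Ioc ε u) := h2.mono_set (by rw [hsplit]; exact subset_union_left)
      have h4 : IntegrableOn g₂ (Ioi u) := h2.mono_set (by rw [hsplit]; exact subset_union_right)
      have h5 : (∫ t in Ioi ε, g₂ t) = (∫ t in Ioc ε u, g₂ t) + ∫ t in Ioi u, g₂ t := by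
        rw [hsplit]
        exact setIntegral_union (Ioc_disjoint_Ioi le_rfl) measurableSet_Ioi h3 h4
      rw [hAdef, intervalIntegral.integral_of_le hεu]
      simp only
      linarith [h5]
    have hFTC : HasDerivAt (fun u => ∫ t in ε..u, g₂ t) (g₂ x) x :=
      intervalIntegral.integral_hasDerivAt_right (hII g₂ hg₂cont ε x hε0 hx0)
        (hmeasAt g₂ hg₂cont x hx) (hg₂cont.continuousAt (isOpen_Ioi.mem_nhds hx))
    have hD : HasDerivAt (fun u => (∫ t in Ioi ε, g₂ t) - ∫ t in ε..u, g₂ t) (-(g₂ x)) x := by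
      exact hFTC.const_sub _
    apply hD.congr_of_eventuallyEq
    filter_upwards [isOpen_Ioi.mem_nhds (show x ∈ Ioi ε from hεx)] with u hu
    exact hrepr u hu
  -- derivative of B
  have hB' : ∀ x ∈ Ioi (0:ℝ), HasDerivAt B (g₁ x) x := by
    intro x hx
    have hx0 : (0:ℝ) < x := hx
    set ε : ℝ := x / 2 with hεdef
    have hε0 : (0:ℝ) < ε := by positivity
    have hεx : ε < x := by rw [hεdef]; linarith
    have hrepr : ∀ u ∈ Ioi ε, B u = (∫ t in Ioc (0:ℝ) ε, g₁ t) + ∫ t in ε..u, g₁ t := by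
      intro u hu
      have hεu : ε ≤ u := le_of_lt hu
      have hu0 : (0:ℝ) < u := lt_of_lt_of_le hε0 hεu
      have hsplit : Ioc (0:ℝ) u = Ioc 0 ε ∪ Ioc ε u :=
        (Ioc_union_Ioc_eq_Ioc (le_of_lt hε0) hεu).symm
      have h2 : IntegrableOn g₁ (Ioc (0:ℝ) u) := hInt₁ u hu0
      have h3 : IntegrableOn g₁ (Ioc (0:ℝ) ε) :=
        h2.mono_set (by rw [hsplit]; exact subset_union_left)
      have h4 : IntegrableOn g₁ (Ioc ε u) :=
        h2.mono_set (by rw [hsplit]; exact subset_union_right)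
      rw [hBdef, intervalIntegral.integral_of_le hεu]
      simp only
      rw [hsplit]
      exact setIntegral_union (Ioc_disjoint_Ioc.2 (le_trans inf_le_left le_sup_right))
          measurableSet_Ioc h3 h4
    have hFTC : HasDerivAt (fun u => ∫ t in ε..u, g₁ t) (g₁ x) x :=
      intervalIntegral.integral_hasDerivAt_right (hII g₁ hg₁cont ε x hε0 hx0)
        (hmeasAt g₁ hg₁cont x hx) (hg₁cont.continuousAt (isOpen_Ioi.mem_nhds hx))
    have hD : HasDerivAt (fun u => (∫ t in Ioc (0:ℝ) ε, g₁ t) + ∫ t in ε..u, g₁ t) (g₁ x) x := by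
      exact hFTC.const_add _
    apply hD.congr_of_eventuallyEq
    filter_upwards [isOpen_Ioi.mem_nhds (show x ∈ Ioi ε from hεx)] with u hu
    exact hrepr u hu
  -- y agrees with A y₁ + B y₂ on Ioi 0
  have hyEq : ∀ x ∈ Ioi (0:ℝ), y =ᶠ[nhds x] fun u => A u * y₁ u + B u * y₂ u := by
    intro x hx
    filter_upwards [isOpen_Ioi.mem_nhds hx] with u hu
    exact hy u hu
  -- first derivative of y
  have hyD : ∀ x ∈ Ioi (0:ℝ), HasDerivAt y (A x * y₁' x + B x * y₂' x) x := by
    intro x hx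
    have h : HasDerivAt (fun u => A u * y₁ u + B u * y₂ u)
        ((-(g₂ x) * y₁ x + A x * y₁' x) + (g₁ x * y₂ x + B x * y₂' x)) x :=
      ((hA' x hx).mul (hy₁ x hx)).add ((hB' x hx).mul (hy₂ x hx))
    have h' := h.congr_of_eventuallyEq (hyEq x hx)
    have hcancel : -(g₂ x) * y₁ x + g₁ x * y₂ x = 0 := by
      simp only [hg₂def, hg₁def]
      ring
    have : A x * y₁' x + B x * y₂' x
        = (-(g₂ x) * y₁ x + A x * y₁' x) + (g₁ x * y₂ x + B x * y₂' x) := by linarith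
    rw [this]
    exact h'
  have hderivy : ∀ x ∈ Ioi (0:ℝ), deriv y x = A x * y₁' x + B x * y₂' x :=
    fun x hx => (hyD x hx).deriv
  -- second derivative of y
  have hy''D : ∀ x ∈ Ioi (0:ℝ), HasDerivAt (deriv y)
      ((-(g₂ x) * y₁' x + A x * y₁'' x) + (g₁ x * y₂' x + B x * y₂'' x)) x := by
    intro x hx
    have h : HasDerivAt (fun u => A u * y₁' u + B u * y₂' u)
        ((-(g₂ x) * y₁' x + A x * y₁'' x) + (g₁ x * y₂' x + B x * y₂'' x)) x :=
      ((hA' x hx).mul (hy₁' x hx)).add ((hB' x hx).mul (hy₂' x hx))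
    apply h.congr_of_eventuallyEq
    filter_upwards [isOpen_Ioi.mem_nhds hx] with u hu
    exact hderivy u hu
  -- finish
  intro x hx
  have hx0 : (0:ℝ) < x := hx
  have hder2 : deriv (deriv y) x
      = (-(g₂ x) * y₁' x + A x * y₁'' x) + (g₁ x * y₂' x + B x * y₂'' x) :=
    (hy''D x hx).deriv
  have hWrW : y₁ x * y₂' x - y₁' x * y₂ x = W x := by rw [hWr x hx, hW x hx]
  have hDx : x ^ 2 * W x ≠ 0 := hDne x hx
  have h3 : x ^ 2 * (g₁ x * y₂' x - g₂ x * y₁' x) = f x := by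
    have step : x ^ 2 * (g₁ x * y₂' x - g₂ x * y₁' x)
        = x ^ 2 * (f x * (y₁ x * y₂' x - y₁' x * y₂ x)) / (x ^ 2 * W x) := by
      simp only [hg₁def, hg₂def]
      ring
    rw [step, hWrW]
    field_simp
    exact mul_div_cancel_right₀ _ (right_ne_zero_of_mul hDx)
  rw [hder2, hderivy x hx, hy x hx]
  have hA0 := hode₁ x hx
  have hB0 := hode₂ x hx
  have hAx : (∫ t in Ioi x, g₂ t) = A x := rfl
  have hBx : (∫ t in Ioc (0:ℝ) x, g₁ t) = B x := rfl
  rw [hAx, hBx]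
  linear_combination A x * hA0 + B x * hB0 + h3
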